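/- Let M > 0 and let φ, ψ ∈ C([−h,0];H) satisfy ‖φ‖_C ≤ M and ‖ψ‖_C ≤ M. Suppose ρ_φ, ρ_ψ ∈ [0,h] satisfy R(ρ_φ;φ) = 1 and R(ρ_ψ;ψ) = 1. Then |ρ_φ − ρ_ψ| ≤ (2 C₁ h M / (C₃ C₂²)) ‖φ − ψ‖_C; that is, the state-dependent delay defined by the threshold condition is Lipschitz continuous on bounded subsets of C([−h,0];H). -/

import Mathlib

/-- The threshold functional `R(ρ;φ) = ∫_{-ρ}^{0} ( C₁/(C₂ + ‖φ(s)‖²) + C₃ ) ds` for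
`φ ∈ C([-h,0];H)` and `ρ ∈ [0,h]` (the evaluation of `φ` is extended by clamping the
argument to `[-h,0]`; for `ρ ∈ [0,h]` the integration variable stays in `[-h,0]`). -/
noncomputable def Rthr {H : Type*} [NormedAddCommGroup H] (h C₁ C₂ C₃ : ℝ)
    (hh0 : -h ≤ (0 : ℝ)) (φ : C(Set.Icc (-h) (0 : ℝ), H)) (ρ : ℝ) : ℝ :=
  ∫ s in (-ρ)..(0 : ℝ), (C₁ / (C₂ + ‖Set.IccExtend hh0 (⇑φ) s‖ ^ 2) + C₃)

lemma Rthr_cont_aux {H : Type*} [NormedAddCommGroup H] (h C₁ C₂ C₃ : ℝ)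
    (hC₂ : 0 < C₂) (hh0 : -h ≤ (0 : ℝ)) (φ : C(Set.Icc (-h) (0 : ℝ), H)) :
    Continuous fun s => (C₁ / (C₂ + ‖Set.IccExtend hh0 (⇑φ) s‖ ^ 2) + C₃) := by
  have hc : Continuous fun s => ‖Set.IccExtend hh0 (⇑φ) s‖ ^ 2 :=
    ((φ.continuous.Icc_extend').norm).pow 2
  refine ((continuous_const.div (continuous_const.add hc) ?_).add continuous_const)
  intro s
  have : (0:ℝ) ≤ ‖Set.IccExtend hh0 (⇑φ) s‖ ^ 2 := sq_nonneg _
  exact (add_pos_of_pos_of_nonneg hC₂ this).ne'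

lemma key_bound (C₁ C₂ M δ a b : ℝ) (hC₁ : 0 < C₁) (hC₂ : 0 < C₂)
    (ha : 0 ≤ a) (hb : 0 ≤ b) (haM : a ≤ M) (hbM : b ≤ M) (hab : |a - b| ≤ δ) :
    |C₁ / (C₂ + b ^ 2) - C₁ / (C₂ + a ^ 2)| ≤ 2 * C₁ * M * δ / C₂ ^ 2 := by
  have hda : (0:ℝ) < C₂ + a ^ 2 := by positivity
  have hdb : (0:ℝ) < C₂ + b ^ 2 := by positivity
  have heq : C₁ / (C₂ + b ^ 2) - C₁ / (C₂ + a ^ 2)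
      = C₁ * (a ^ 2 - b ^ 2) / ((C₂ + a ^ 2) * (C₂ + b ^ 2)) := by
    field_simp; ring
  rw [heq, abs_div, abs_of_pos (show (0:ℝ) < (C₂ + a ^ 2) * (C₂ + b ^ 2) from by positivity)]
  have hnum : |C₁ * (a ^ 2 - b ^ 2)| ≤ C₁ * (2 * M * δ) := by
    rw [abs_mul, abs_of_pos hC₁]
    have h1 : |a ^ 2 - b ^ 2| = |a - b| * |a + b| := by
      rw [← abs_mul]; ring_nf
    have h2 : |a + b| ≤ 2 * M := by
      rw [abs_of_nonneg (by linarith)]; linarith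
    have hδ0 : 0 ≤ δ := le_trans (abs_nonneg _) hab
    calc C₁ * |a ^ 2 - b ^ 2| = C₁ * (|a - b| * |a + b|) := by rw [h1]
      _ ≤ C₁ * (δ * (2 * M)) := by
          exact mul_le_mul_of_nonneg_left
            (mul_le_mul hab h2 (abs_nonneg _) hδ0) hC₁.le
      _ = C₁ * (2 * M * δ) := by ring
  have hden : C₂ ^ 2 ≤ (C₂ + a ^ 2) * (C₂ + b ^ 2) := by nlinarith [sq_nonneg a, sq_nonneg b]
  have hδ0 : 0 ≤ δ := le_trans (abs_nonneg _) hab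
  have hM0 : 0 ≤ M := le_trans ha haM
  calc |C₁ * (a ^ 2 - b ^ 2)| / ((C₂ + a ^ 2) * (C₂ + b ^ 2))
      ≤ (C₁ * (2 * M * δ)) / C₂ ^ 2 :=
        div_le_div₀ (mul_nonneg hC₁.le (by nlinarith)) hnum (by positivity) hden
    _ = 2 * C₁ * M * δ / C₂ ^ 2 := by ring

/-- If `‖φ‖_C ≤ M`, `‖ψ‖_C ≤ M` and `ρ_φ, ρ_ψ ∈ [0,h]` satisfy
`R(ρ_φ;φ) = 1 = R(ρ_ψ;ψ)`, then
`|ρ_φ - ρ_ψ| ≤ (2 C₁ h M / (C₃ C₂²)) ‖φ - ψ‖_C`:  the threshold state-dependent delay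
is Lipschitz on bounded subsets of `C([-h,0];H)`. -/
theorem threshold_delay_lipschitz {H : Type*} [NormedAddCommGroup H]
    [InnerProductSpace ℝ H] [CompleteSpace H]
    (h C₁ C₂ C₃ M : ℝ) (hh : 0 < h) (hC₁ : 0 < C₁) (hC₂ : 0 < C₂) (hC₃ : 0 < C₃)
    (hM : 0 < M)
    (φ ψ : C(Set.Icc (-h) (0 : ℝ), H)) (hφ : ‖φ‖ ≤ M) (hψ : ‖ψ‖ ≤ M)
    (ρφ ρψ : ℝ) (hρφ : ρφ ∈ Set.Icc (0 : ℝ) h) (hρψ : ρψ ∈ Set.Icc (0 : ℝ) h)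
    (hRφ : Rthr h C₁ C₂ C₃ (by linarith) φ ρφ = 1)
    (hRψ : Rthr h C₁ C₂ C₃ (by linarith) ψ ρψ = 1) :
    |ρφ - ρψ| ≤ (2 * C₁ * h * M / (C₃ * C₂ ^ 2)) * ‖φ - ψ‖ := by
  have hh0 : -h ≤ (0:ℝ) := by linarith
  wlog hle : ρψ ≤ ρφ generalizing φ ψ ρφ ρψ with Hwlog
  · rw [abs_sub_comm, norm_sub_rev]
    exact Hwlog ψ φ hψ hφ ρψ ρφ hρψ hρφ hRψ hRφ (le_of_not_ge hle)
  -- notation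
  set fφ : ℝ → ℝ := fun s => C₁ / (C₂ + ‖Set.IccExtend hh0 (⇑φ) s‖ ^ 2) + C₃ with hfφ
  set fψ : ℝ → ℝ := fun s => C₁ / (C₂ + ‖Set.IccExtend hh0 (⇑ψ) s‖ ^ 2) + C₃ with hfψ
  have hcφ : Continuous fφ := Rthr_cont_aux h C₁ C₂ C₃ hC₂ hh0 φ
  have hcψ : Continuous fψ := Rthr_cont_aux h C₁ C₂ C₃ hC₂ hh0 ψ
  have hintφ : ∀ a b : ℝ, IntervalIntegrable fφ MeasureTheory.volume a b :=
    fun a b => hcφ.intervalIntegrable a b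
  have hintψ : ∀ a b : ℝ, IntervalIntegrable fψ MeasureTheory.volume a b :=
    fun a b => hcψ.intervalIntegrable a b
  set δ := ‖φ - ψ‖ with hδ
  have hδ0 : 0 ≤ δ := norm_nonneg _
  -- split the integral
  have hsplit : (∫ s in (-ρφ)..(-ρψ), fφ s) + (∫ s in (-ρψ)..(0:ℝ), fφ s)
      = ∫ s in (-ρφ)..(0:ℝ), fφ s :=
    intervalIntegral.integral_add_adjacent_intervals (hintφ _ _) (hintφ _ _)
  have hmid : (∫ s in (-ρφ)..(-ρψ), fφ s)
      = ∫ s in (-ρψ)..(0:ℝ), (fψ s - fφ s) := by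
    rw [intervalIntegral.integral_sub (hintψ _ _) (hintφ _ _)]
    have h1 : (∫ s in (-ρφ)..(0:ℝ), fφ s) = 1 := hRφ
    have h2 : (∫ s in (-ρψ)..(0:ℝ), fψ s) = 1 := hRψ
    linarith [hsplit]
  -- lower bound
  have hlow : C₃ * (ρφ - ρψ) ≤ ∫ s in (-ρφ)..(-ρψ), fφ s := by
    have : (∫ _s in (-ρφ)..(-ρψ), C₃) ≤ ∫ s in (-ρφ)..(-ρψ), fφ s := by
      apply intervalIntegral.integral_mono_on (by linarith)
        (intervalIntegrable_const) (hintφ _ _)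
      intro x _
      have : (0:ℝ) ≤ C₁ / (C₂ + ‖Set.IccExtend hh0 (⇑φ) x‖ ^ 2) := by positivity
      simp only [hfφ]; linarith
    rwa [intervalIntegral.integral_const, smul_eq_mul, show (-ρψ - -ρφ) = ρφ - ρψ by ring,
      mul_comm] at this
  -- upper bound
  have hup : (∫ s in (-ρψ)..(0:ℝ), (fψ s - fφ s)) ≤ 2 * C₁ * M * δ / C₂ ^ 2 * h := by
    have hbound : ∀ x ∈ Set.uIoc (-ρψ) (0:ℝ), ‖fψ x - fφ x‖ ≤ 2 * C₁ * M * δ / C₂ ^ 2 := by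
      intro x _
      have hsub : fψ x - fφ x
          = C₁ / (C₂ + ‖Set.IccExtend hh0 (⇑ψ) x‖ ^ 2)
            - C₁ / (C₂ + ‖Set.IccExtend hh0 (⇑φ) x‖ ^ 2) := by
        simp only [hfφ, hfψ]; ring
      rw [Real.norm_eq_abs, hsub]
      set p := Set.projIcc (-h) (0:ℝ) hh0 x with hp
      have haM : ‖φ p‖ ≤ M := le_trans (φ.norm_coe_le_norm p) hφ
      have hbM : ‖ψ p‖ ≤ M := le_trans (ψ.norm_coe_le_norm p) hψ
      have habδ : |‖φ p‖ - ‖ψ p‖| ≤ δ := by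
        refine le_trans (abs_norm_sub_norm_le _ _) ?_
        exact le_trans ((φ - ψ).norm_coe_le_norm p) le_rfl
      exact key_bound C₁ C₂ M δ ‖φ p‖ ‖ψ p‖ hC₁ hC₂ (norm_nonneg _) (norm_nonneg _)
        haM hbM habδ
    have := intervalIntegral.norm_integral_le_of_norm_le_const hbound
    rw [Real.norm_eq_abs] at this
    have habs : |(0:ℝ) - (-ρψ)| = ρψ := by
      rw [sub_neg_eq_add, zero_add, abs_of_nonneg hρψ.1]
    rw [habs] at this
    have h1 : (∫ s in (-ρψ)..(0:ℝ), (fψ s - fφ s)) ≤ 2 * C₁ * M * δ / C₂ ^ 2 * ρψ :=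
      le_trans (le_abs_self _) this
    have h2 : 2 * C₁ * M * δ / C₂ ^ 2 * ρψ ≤ 2 * C₁ * M * δ / C₂ ^ 2 * h :=
      mul_le_mul_of_nonneg_left hρψ.2 (by positivity)
    linarith
  -- combine
  have hkey : C₃ * (ρφ - ρψ) ≤ 2 * C₁ * M * δ / C₂ ^ 2 * h := by
    rw [hmid] at hlow; linarith
  rw [abs_of_nonneg (by linarith : (0:ℝ) ≤ ρφ - ρψ)]
  rw [div_mul_eq_mul_div, le_div_iff₀ (by positivity)] at *
  nlinarith [hkey, hC₃.le]
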